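/- Let (E,d) be a metric space with basepoint φ_ref, let G be a locally compact topological group acting continuously and properly on E by isometries, and let H ⊆ G be a closed subgroup. Let F : E → ℝ ∪ {+∞} be quasi G-invariant and not identically +∞. Then F is coercive modulo H if and only if F is coercive modulo G and the quotient space G/H is compact. -/

import Mathlib

open Set

private lemma aux_compactSpace_quotient {G : Type*} [Group G] [TopologicalSpace G]
    (H : Subgroup G) (K : Set G) (hK : IsCompact K)
    (hcov : ∀ g : G, ∃ k ∈ K, ∃ h ∈ H, g = k * h) :
    CompactSpace (G ⧸ H) := by
  refine ⟨?_⟩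
  have himg : (Set.univ : Set (G ⧸ H)) = QuotientGroup.mk '' K := by
    refine subset_antisymm ?_ (subset_univ _)
    rintro q -
    obtain ⟨g, rfl⟩ := QuotientGroup.mk_surjective q
    obtain ⟨k, hk, h, hh, rfl⟩ := hcov g
    exact ⟨k, hk, (QuotientGroup.mk_mul_of_mem k hh).symm⟩
  rw [himg]
  exact hK.image QuotientGroup.continuous_mk

private lemma aux_exists_compact {G : Type*} [Group G] [TopologicalSpace G]
    [IsTopologicalGroup G] [LocallyCompactSpace G] (H : Subgroup G)
    (hc : CompactSpace (G ⧸ H)) :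
    ∃ K : Set G, IsCompact K ∧ ∀ g : G, ∃ k ∈ K, ∃ h ∈ H, g = k * h := by
  have key : ∀ q : G ⧸ H, ∃ p : Set (G ⧸ H) × Set G, IsOpen p.1 ∧ q ∈ p.1 ∧ IsCompact p.2 ∧
      p.1 ⊆ QuotientGroup.mk '' p.2 := by
    intro q
    obtain ⟨g, rfl⟩ := QuotientGroup.mk_surjective q
    obtain ⟨V, hVc, hVn⟩ := exists_compact_mem_nhds g
    exact ⟨(QuotientGroup.mk '' interior V, V),
      QuotientGroup.isOpenMap_coe _ isOpen_interior,
      ⟨g, mem_interior_iff_mem_nhds.2 hVn, rfl⟩, hVc, image_mono interior_subset⟩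
  choose p hopen hmem hcomp hsub using key
  obtain ⟨t, ht⟩ := isCompact_univ.elim_finite_subcover (fun q => (p q).1) hopen
    (fun q _ => mem_iUnion.2 ⟨q, hmem q⟩)
  refine ⟨⋃ q ∈ t, (p q).2, t.isCompact_biUnion (fun q _ => hcomp q), fun g => ?_⟩
  have hg : (g : G ⧸ H) ∈ ⋃ q ∈ t, (p q).1 := ht (mem_univ _)
  obtain ⟨q, hq, hgq⟩ := mem_iUnion₂.1 hg
  obtain ⟨k, hk, hkg⟩ := hsub q hgq
  exact ⟨k, mem_biUnion hq hk, k⁻¹ * g, (QuotientGroup.eq).1 hkg, by group⟩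

/-- Let a locally compact group `G` act continuously and
properly by isometries on a metric space `E` with basepoint `φ_ref`, let
`H ⊆ G` be a closed subgroup, and let `F : E → ℝ ∪ {+∞}` be quasi
`G`-invariant and not identically `+∞`. Then `F` is coercive modulo `H` iff
`F` is coercive modulo `G` and `G/H` is compact. -/
theorem coercive_mod_subgroup_iff
    {E G : Type*} [MetricSpace E] [Group G] [TopologicalSpace G]
    [IsTopologicalGroup G] [LocallyCompactSpace G] [MulAction G E]
    (hcont : Continuous fun p : G × E => p.1 • p.2)
    (hiso : ∀ g : G, Isometry (fun x : E => g • x))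
    (hproper : ∀ (a b : E) (C : ℝ), IsCompact (closure {g : G | dist a (g • b) ≤ C}))
    (φ_ref : E)
    (H : Subgroup G) (hH : IsClosed (H : Set G))
    (F : E → EReal)
    (hquasi_fin : ∀ (g : G) (x : E), F (g • x) ≠ ⊤ ↔ F x ≠ ⊤)
    (hquasi : ∀ (g : G) (x y : E), F x ≠ ⊤ → F y ≠ ⊤ →
      F (g • x) - F (g • y) = F x - F y)
    (hbot : ∀ x : E, F x ≠ ⊥)
    (hne : ∃ x : E, F x ≠ ⊤) :
    (∃ σ C : ℝ, 0 < σ ∧ 0 < C ∧ ∀ x : E,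
        ((σ * (⨅ h : H, dist x ((h : G) • φ_ref)) - C : ℝ) : EReal) ≤ F x) ↔
      ((∃ σ C : ℝ, 0 < σ ∧ 0 < C ∧ ∀ x : E,
          ((σ * (⨅ g : G, dist x (g • φ_ref)) - C : ℝ) : EReal) ≤ F x) ∧
        CompactSpace (G ⧸ H)) := by
  obtain ⟨x0, hx0⟩ := hne
  set dH : E → ℝ := fun x => ⨅ h : H, dist x ((h : G) • φ_ref) with hdH
  set dG : E → ℝ := fun x => ⨅ g : G, dist x (g • φ_ref) with hdG
  have hbddH : ∀ x : E, BddBelow (Set.range fun h : H => dist x ((h : G) • φ_ref)) :=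
    fun x => ⟨0, by rintro _ ⟨h, rfl⟩; exact dist_nonneg⟩
  have hbddG : ∀ x : E, BddBelow (Set.range fun g : G => dist x (g • φ_ref)) :=
    fun x => ⟨0, by rintro _ ⟨g, rfl⟩; exact dist_nonneg⟩
  have hdHnn : ∀ x, 0 ≤ dH x := fun x => Real.iInf_nonneg fun h => dist_nonneg
  have hGH : ∀ x, dG x ≤ dH x := fun x => le_ciInf fun h => ciInf_le (hbddG x) (h : G)
  constructor
  · rintro ⟨σ, C, hσ, hC, hcoer⟩
    refine ⟨⟨σ, C, hσ, hC, fun x => ?_⟩, ?_⟩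
    · calc ((σ * dG x - C : ℝ) : EReal) ≤ ((σ * dH x - C : ℝ) : EReal) := by
            apply EReal.coe_le_coe_iff.2; nlinarith [hGH x]
        _ ≤ F x := hcoer x
    · -- compactness of the quotient
      have hfin : ∀ g : G, F (g • x0) ≠ ⊤ := fun g => (hquasi_fin g x0).2 hx0
      set f : G → ℝ := fun g => (F (g • x0)).toReal with hf
      have hFg : ∀ g : G, F (g • x0) = ((f g : ℝ) : EReal) := fun g =>
        (EReal.coe_toReal (hfin g) (hbot _)).symm
      have hFx0 : F x0 = ((f 1 : ℝ) : EReal) := by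
        have h1 : (1 : G) • x0 = x0 := one_smul G x0
        rw [← h1]; exact hFg 1
      have hcoc : ∀ g g' : G, f (g * g') - f g = f g' - f 1 := by
        intro g g'
        have h1 := hquasi g (g' • x0) x0 (hfin g') hx0
        rw [← mul_smul, hFg (g * g'), hFg g, hFg g', hFx0, ← EReal.coe_sub,
          ← EReal.coe_sub] at h1
        exact_mod_cast h1
      have hlow : ∀ g : G, -C ≤ f g := by
        intro g
        have h1 := hcoer (g • x0)
        rw [hFg g] at h1
        have h2 := EReal.coe_le_coe_iff.1 h1
        nlinarith [hdHnn (g • x0)]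
      have hc1 : ∀ (g : G) (n : ℕ), f (g ^ n) - f 1 = n * (f g - f 1) := by
        intro g n
        induction n with
        | zero => simp
        | succ n ih =>
          have h1 := hcoc (g ^ n) g
          rw [pow_succ]
          push_cast
          linarith
      have hcnn : ∀ g : G, 0 ≤ f g - f 1 := by
        intro g
        by_contra hneg
        push_neg at hneg
        have hpos : 0 < f 1 - f g := by linarith
        obtain ⟨n, hn⟩ := exists_nat_gt ((C + f 1) / (f 1 - f g))
        rw [div_lt_iff₀ hpos] at hn
        have h1 := hc1 g n
        have h2 := hlow (g ^ n)
        nlinarith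
      have hczero : ∀ g : G, f g = f 1 := by
        intro g
        have h1 := hcnn g
        have h2 := hcnn g⁻¹
        have h3 := hcoc g g⁻¹
        rw [mul_inv_cancel] at h3
        linarith
      set R : ℝ := (f 1 + C) / σ with hRdef
      have hR : ∀ g : G, dH (g • x0) ≤ R := by
        intro g
        have h1 := hcoer (g • x0)
        rw [hFg g, hczero g] at h1
        have h2 := EReal.coe_le_coe_iff.1 h1
        rw [hRdef, le_div_iff₀ hσ]
        nlinarith
      have hcov : ∀ g : G, ∃ k ∈ (closure {u : G | dist φ_ref (u • x0) ≤ R + 1})⁻¹,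
          ∃ h ∈ H, g = k * h := by
        intro g
        have h1 : dH (g⁻¹ • x0) < R + 1 := lt_of_le_of_lt (hR g⁻¹) (by linarith)
        have h1' : (⨅ h : H, dist (g⁻¹ • x0) ((h : G) • φ_ref)) < R + 1 := h1
        obtain ⟨h, hh⟩ := exists_lt_of_ciInf_lt h1'
        set u : G := (h : G)⁻¹ * g⁻¹ with hu
        have hmem : u ∈ {u : G | dist φ_ref (u • x0) ≤ R + 1} := by
          have he : dist φ_ref (u • x0) = dist ((h : G) • φ_ref) (g⁻¹ • x0) := by
            have h2 := (hiso (h : G)).dist_eq φ_ref (u • x0)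
            rw [← h2, ← mul_smul, hu]
            congr 2
            group
          show dist φ_ref (u • x0) ≤ R + 1
          rw [he, dist_comm]
          exact le_of_lt hh
        refine ⟨u⁻¹, ?_, (h : G)⁻¹, inv_mem h.2, by rw [hu]; group⟩
        rw [Set.mem_inv, inv_inv]
        exact subset_closure hmem
      exact aux_compactSpace_quotient H _ ((hproper φ_ref x0 (R + 1)).inv) hcov
  · rintro ⟨⟨σ, C, hσ, hC, hcoer⟩, hcpt⟩
    obtain ⟨K, hKc, hKcov⟩ := aux_exists_compact H hcpt
    have hcont' : Continuous fun k : G => dist (k • φ_ref) φ_ref :=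
      Continuous.dist (hcont.comp (continuous_id.prodMk continuous_const)) continuous_const
    obtain ⟨M0, hM0⟩ := (hKc.inv.image hcont').bddAbove
    set M : ℝ := max M0 0 with hM
    have hMnn : 0 ≤ M := le_max_right _ _
    have hMb : ∀ k ∈ K⁻¹, dist (k • φ_ref) φ_ref ≤ M :=
      fun k hk => le_trans (hM0 ⟨k, hk, rfl⟩) (le_max_left _ _)
    have hkey : ∀ x : E, dH x - M ≤ dG x := by
      intro x
      refine le_ciInf fun g => ?_
      obtain ⟨k, hk, h, hh, hg⟩ := hKcov g⁻¹
      have hgd : g = h⁻¹ * k⁻¹ := by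
        have : g⁻¹ = k * h := hg
        rw [← inv_inv g, this]; group
      have h1 : dH x ≤ dist x ((h⁻¹ : G) • φ_ref) :=
        ciInf_le (hbddH x) (⟨h⁻¹, inv_mem hh⟩ : H)
      have h2 : dist (g • φ_ref) ((h⁻¹ : G) • φ_ref) ≤ M := by
        have he : dist (g • φ_ref) ((h⁻¹ : G) • φ_ref) = dist (k⁻¹ • φ_ref) φ_ref := by
          have h3 := (hiso h⁻¹).dist_eq (k⁻¹ • φ_ref) φ_ref
          rw [← h3, ← mul_smul, ← hgd]
        rw [he]
        exact hMb k⁻¹ (by rw [Set.mem_inv, inv_inv]; exact hk)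
      have h3 := dist_triangle x (g • φ_ref) ((h⁻¹ : G) • φ_ref)
      linarith
    have hCM : 0 < C + σ * M := by nlinarith
    refine ⟨σ, C + σ * M, hσ, hCM, fun x => ?_⟩
    calc ((σ * dH x - (C + σ * M) : ℝ) : EReal) ≤ ((σ * dG x - C : ℝ) : EReal) := by
          apply EReal.coe_le_coe_iff.2
          nlinarith [hkey x]
      _ ≤ F x := hcoer x
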